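/- arXiv:2605.24974 — 2 statements merged into one kernel-verified Lean document; each statement's English description precedes it below -/
import Mathlib

section
/- The normalized second moment of the hexagonal lattice A₂ equals 5/(36√3). -/
open MeasureTheory Real Set intervalIntegral

/-- The hexagonal lattice `A₂`, generated by `v₁ = (1,0)` and `v₂ = (1/2, √3/2)`. -/
def hexLattice : Set (EuclideanSpace ℝ (Fin 2)) :=
  {x | ∃ k₁ k₂ : ℤ, x 0 = (k₁ : ℝ) + (k₂ : ℝ) / 2 ∧ x 1 = (k₂ : ℝ) * (Real.sqrt 3 / 2)}

/-- The Voronoi cell of the origin of a point set `Λ`. -/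
def voronoiCell (Λ : Set (EuclideanSpace ℝ (Fin 2))) : Set (EuclideanSpace ℝ (Fin 2)) :=
  {x | ∀ p ∈ Λ, ‖x‖ ≤ ‖x - p‖}


lemma hex_abs_le (k₁ k₂ : ℤ) : |k₁| ≤ k₁^2 + k₁*k₂ + k₂^2 := by
  rcases eq_or_ne k₂ 0 with h | h
  · subst h
    have h1 : |k₁| ≤ |k₁|^2 := by
      rcases eq_or_ne k₁ 0 with h0 | h0
      · simp [h0]
      · nlinarith [Int.one_le_abs h0, abs_nonneg k₁]
    nlinarith [sq_abs k₁]
  · have h1 : 1 ≤ k₂^2 := by nlinarith [Int.one_le_abs h, abs_nonneg k₂, sq_abs k₂]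
    nlinarith [sq_nonneg (k₁+k₂), sq_abs k₁, sq_nonneg (|k₁| - 1)]

lemma hexKey (k₁ k₂ : ℤ) (a b : ℝ) (ha : |a| ≤ 1/2) (hb : |b| ≤ 1/2) (hab : |a - b| ≤ 1/2) :
    2*((k₁:ℝ)*a + (k₂:ℝ)*b) ≤ (k₁:ℝ)^2 + (k₁:ℝ)*(k₂:ℝ) + (k₂:ℝ)^2 := by
  have h1 : |k₁| ≤ k₁^2 + k₁*k₂ + k₂^2 := hex_abs_le k₁ k₂
  have h2 : |k₂| ≤ k₁^2 + k₁*k₂ + k₂^2 := by have := hex_abs_le k₂ k₁; linarith [this]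
  have h3 : |k₁ + k₂| ≤ k₁^2 + k₁*k₂ + k₂^2 := by
    have := hex_abs_le (k₁ + k₂) (-k₂); push_cast at this ⊢; nlinarith [this]
  have H1 : |(k₁:ℝ)| ≤ (k₁:ℝ)^2 + (k₁:ℝ)*(k₂:ℝ) + (k₂:ℝ)^2 := by exact_mod_cast h1
  have H2 : |(k₂:ℝ)| ≤ (k₁:ℝ)^2 + (k₁:ℝ)*(k₂:ℝ) + (k₂:ℝ)^2 := by exact_mod_cast h2
  have H3 : |(k₁:ℝ) + (k₂:ℝ)| ≤ (k₁:ℝ)^2 + (k₁:ℝ)*(k₂:ℝ) + (k₂:ℝ)^2 := by exact_mod_cast h3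
  set A := (k₁:ℝ); set B := (k₂:ℝ)
  rw [abs_le] at ha hb hab
  rcases le_total 0 A with hA | hA <;> rcases le_total 0 B with hB | hB
  · rw [abs_of_nonneg (by linarith : (0:ℝ) ≤ A + B)] at H3
    nlinarith [mul_le_mul_of_nonneg_left ha.2 hA, mul_le_mul_of_nonneg_left hb.2 hB]
  · rcases le_total 0 (A + B) with hAB | hAB
    · rw [abs_of_nonneg hA] at H1
      nlinarith [mul_le_mul_of_nonneg_left ha.2 hAB,
        mul_le_mul_of_nonneg_left hab.2 (by linarith : (0:ℝ) ≤ -B)]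
    · rw [abs_of_nonpos hB] at H2
      nlinarith [mul_le_mul_of_nonneg_left hab.2 hA,
        mul_le_mul_of_nonneg_left hb.1 (by linarith : (0:ℝ) ≤ -(A+B))]
  · rcases le_total 0 (A + B) with hAB | hAB
    · rw [abs_of_nonneg hB] at H2
      nlinarith [mul_le_mul_of_nonneg_left hab.1 (by linarith : (0:ℝ) ≤ -A),
        mul_le_mul_of_nonneg_left hb.2 hAB]
    · rw [abs_of_nonpos hA] at H1
      nlinarith [mul_le_mul_of_nonneg_left (show -a ≤ 1/2 by linarith) (by linarith : (0:ℝ) ≤ -(A+B)),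
        mul_le_mul_of_nonneg_left (show -(a-b) ≤ 1/2 by linarith) hB]
  · rw [abs_of_nonpos (by linarith : A + B ≤ 0)] at H3
    nlinarith [mul_le_mul_of_nonneg_left ha.1 (by linarith : (0:ℝ) ≤ -A),
      mul_le_mul_of_nonneg_left hb.1 (by linarith : (0:ℝ) ≤ -B)]



lemma hex_norm_sq (x : EuclideanSpace ℝ (Fin 2)) : ‖x‖^2 = (x 0)^2 + (x 1)^2 := by
  rw [EuclideanSpace.norm_eq, Real.sq_sqrt (by positivity)]
  simp [Fin.sum_univ_two, Real.norm_eq_abs, sq_abs]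

lemma hex_norm_le (x p : EuclideanSpace ℝ (Fin 2)) :
    ‖x‖ ≤ ‖x - p‖ ↔ 2*(x 0 * p 0 + x 1 * p 1) ≤ (p 0)^2 + (p 1)^2 := by
  rw [← pow_le_pow_iff_left₀ (norm_nonneg x) (norm_nonneg _) (two_ne_zero),
    hex_norm_sq, hex_norm_sq]
  simp only [PiLp.sub_apply]
  constructor <;> intro h <;> nlinarith [h]

lemma voronoi_mem (x : EuclideanSpace ℝ (Fin 2)) :
    x ∈ voronoiCell hexLattice ↔
      |x 0| ≤ 1/2 ∧ |x 0 / 2 + x 1 * (Real.sqrt 3 / 2)| ≤ 1/2 ∧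
        |x 0 / 2 - x 1 * (Real.sqrt 3 / 2)| ≤ 1/2 := by
  have h3sq : Real.sqrt 3 ^ 2 = 3 := Real.sq_sqrt (by norm_num)
  constructor
  · intro hx
    have key : ∀ k₁ k₂ : ℤ, 2*(x 0 * ((k₁:ℝ) + (k₂:ℝ)/2) + x 1 * ((k₂:ℝ) * (Real.sqrt 3/2)))
        ≤ ((k₁:ℝ) + (k₂:ℝ)/2)^2 + ((k₂:ℝ) * (Real.sqrt 3/2))^2 := by
      intro k₁ k₂
      have hp : (WithLp.toLp 2 ![(k₁:ℝ) + (k₂:ℝ)/2, (k₂:ℝ) * (Real.sqrt 3/2)] : EuclideanSpace ℝ (Fin 2))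
          ∈ hexLattice := ⟨k₁, k₂, rfl, rfl⟩
      have := (hex_norm_le x _).mp (hx _ hp)
      simpa using this
    refine ⟨abs_le.2 ⟨?_, ?_⟩, abs_le.2 ⟨?_, ?_⟩, abs_le.2 ⟨?_, ?_⟩⟩
    · have := key (-1) 0; push_cast at this; nlinarith [this]
    · have := key 1 0; push_cast at this; nlinarith [this]
    · have := key 0 (-1); push_cast at this; nlinarith [this, h3sq]
    · have := key 0 1; push_cast at this; nlinarith [this, h3sq]
    · have := key (-1) 1; push_cast at this; nlinarith [this, h3sq]
    · have := key 1 (-1); push_cast at this; nlinarith [this, h3sq]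
  · rintro ⟨h1, h2, h3⟩ p ⟨k₁, k₂, e0, e1⟩
    rw [hex_norm_le, e0, e1]
    have key := hexKey k₁ k₂ (x 0) (x 0 / 2 + x 1 * (Real.sqrt 3/2)) h1 h2 (by
      have : x 0 - (x 0 / 2 + x 1 * (Real.sqrt 3/2)) = x 0 / 2 - x 1 * (Real.sqrt 3/2) := by ring
      rw [this]; exact h3)
    nlinarith [key, h3sq]


noncomputable def hexH (x : ℝ) : ℝ := (1 - |x|) / Real.sqrt 3

lemma integral_cubic (p q r s A B : ℝ) :
    ∫ x in A..B, (p*x^3 + q*x^2 + r*x + s)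
      = p*(B^4 - A^4)/4 + q*(B^3 - A^3)/3 + r*(B^2 - A^2)/2 + s*(B - A) := by
  have h1 : ∀ n : ℕ, IntervalIntegrable (fun x : ℝ => x ^ n) volume A B :=
    fun n => (continuous_pow n).intervalIntegrable A B
  rw [show (fun x : ℝ => p*x^3 + q*x^2 + r*x + s)
      = fun x : ℝ => (p*x^3 + q*x^2) + (r*x^1 + s) from by funext x; ring]
  rw [integral_add (((h1 3).const_mul p).add ((h1 2).const_mul q))
      (((h1 1).const_mul r).add (intervalIntegrable_const)),
    integral_add ((h1 3).const_mul p) ((h1 2).const_mul q),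
    integral_add ((h1 1).const_mul r) intervalIntegrable_const]
  simp only [intervalIntegral.integral_const_mul, integral_pow, intervalIntegral.integral_const, smul_eq_mul]
  push_cast
  ring

lemma sqrt3_pos : (0:ℝ) < Real.sqrt 3 := Real.sqrt_pos.2 (by norm_num)
lemma sqrt3_sq : Real.sqrt 3 ^ 2 = 3 := Real.sq_sqrt (by norm_num)

lemma hexH_nonneg {x : ℝ} (hx : |x| ≤ 1) : 0 ≤ hexH x :=
  div_nonneg (by linarith) sqrt3_pos.le

lemma inner_const (x : ℝ) (hx : x ∈ Icc (-(1/2):ℝ) (1/2)) :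
    ∫ _ in Icc (-hexH x) (hexH x), (1:ℝ) = 2 * hexH x := by
  have h0 : 0 ≤ hexH x := hexH_nonneg (by rw [abs_le]; constructor <;> linarith [hx.1, hx.2])
  rw [setIntegral_const, Real.volume_real_Icc_of_le (by linarith), smul_eq_mul, mul_one]
  ring

lemma inner_moment (x : ℝ) (hx : x ∈ Icc (-(1/2):ℝ) (1/2)) :
    ∫ y in Icc (-hexH x) (hexH x), (x^2 + y^2)
      = 2 * hexH x * x^2 + 2 * (hexH x)^3 / 3 := by
  have h0 : 0 ≤ hexH x := hexH_nonneg (by rw [abs_le]; constructor <;> linarith [hx.1, hx.2])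
  rw [integral_Icc_eq_integral_Ioc, ← intervalIntegral.integral_of_le (by linarith)]
  rw [show (fun y : ℝ => x^2 + y^2) = fun y : ℝ => 0*y^3 + 1*y^2 + 0*y + x^2 from by
    funext y; ring]
  rw [integral_cubic]
  ring

lemma outer_area :
    ∫ x in Icc (-(1/2):ℝ) (1/2), 2 * hexH x = Real.sqrt 3 / 2 := by
  have hc : Continuous fun x : ℝ => 2 * hexH x := by unfold hexH; fun_prop
  rw [integral_Icc_eq_integral_Ioc, ← intervalIntegral.integral_of_le (by norm_num)]
  rw [← intervalIntegral.integral_add_adjacent_intervals (a := -(1/2)) (b := 0) (c := 1/2)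
    (hc.intervalIntegrable _ _) (hc.intervalIntegrable _ _)]
  have e1 : ∫ x in (-(1/2):ℝ)..0, 2 * hexH x
      = ∫ x in (-(1/2):ℝ)..0, ((0:ℝ)*x^3 + 0*x^2 + (2/Real.sqrt 3)*x + 2/Real.sqrt 3) := by
    apply intervalIntegral.integral_congr
    intro x hx
    rw [uIcc_of_le (by norm_num : (-(1/2):ℝ) ≤ 0)] at hx
    simp only [hexH]; rw [abs_of_nonpos hx.2]
    field_simp
    try ring
    try (rw [sqrt3_sq]; ring)
    try (ring_nf; norm_num [sqrt3_sq])
    try ring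
    try linarith [sqrt3_sq]
  have e2 : ∫ x in (0:ℝ)..(1/2), 2 * hexH x
      = ∫ x in (0:ℝ)..(1/2), ((0:ℝ)*x^3 + 0*x^2 + (-(2/Real.sqrt 3))*x + 2/Real.sqrt 3) := by
    apply intervalIntegral.integral_congr
    intro x hx
    rw [uIcc_of_le (by norm_num : (0:ℝ) ≤ 1/2)] at hx
    simp only [hexH]; rw [abs_of_nonneg hx.1]
    field_simp
    try ring
    try (rw [sqrt3_sq]; ring)
    try (ring_nf; norm_num [sqrt3_sq])
    try ring
    try linarith [sqrt3_sq]
  rw [e1, e2, integral_cubic, integral_cubic]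
  have h3 := sqrt3_sq
  have hp := sqrt3_pos
  field_simp
  nlinarith [h3, hp]

lemma outer_moment :
    ∫ x in Icc (-(1/2):ℝ) (1/2), (2 * hexH x * x^2 + 2 * (hexH x)^3 / 3)
      = 5 / (24 * Real.sqrt 3) := by
  have hc : Continuous fun x : ℝ => 2 * hexH x * x^2 + 2 * (hexH x)^3 / 3 := by
    unfold hexH; fun_prop
  have h3 := sqrt3_sq
  have hp := sqrt3_pos
  have hcube : ∀ t : ℝ, (t / Real.sqrt 3)^3 = t^3 / (3 * Real.sqrt 3) := by
    intro t
    rw [div_pow]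
    congr 1
    nlinarith [h3, hp]
  rw [integral_Icc_eq_integral_Ioc, ← intervalIntegral.integral_of_le (by norm_num)]
  rw [← intervalIntegral.integral_add_adjacent_intervals (a := -(1/2)) (b := 0) (c := 1/2)
    (hc.intervalIntegrable _ _) (hc.intervalIntegrable _ _)]
  have e1 : ∫ x in (-(1/2):ℝ)..0, (2 * hexH x * x^2 + 2 * (hexH x)^3 / 3)
      = ∫ x in (-(1/2):ℝ)..0, ((2/Real.sqrt 3 + 2/(9*Real.sqrt 3))*x^3
          + (2/Real.sqrt 3 + 6/(9*Real.sqrt 3))*x^2 + (6/(9*Real.sqrt 3))*x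
          + 2/(9*Real.sqrt 3)) := by
    apply intervalIntegral.integral_congr
    intro x hx
    rw [uIcc_of_le (by norm_num : (-(1/2):ℝ) ≤ 0)] at hx
    simp only [hexH]; rw [abs_of_nonpos hx.2, hcube]
    field_simp
    try ring
    try (rw [sqrt3_sq]; ring)
    try (ring_nf; norm_num [sqrt3_sq])
    try ring
    try linarith [sqrt3_sq]
  have e2 : ∫ x in (0:ℝ)..(1/2), (2 * hexH x * x^2 + 2 * (hexH x)^3 / 3)
      = ∫ x in (0:ℝ)..(1/2), ((-(2/Real.sqrt 3 + 2/(9*Real.sqrt 3)))*x^3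
          + (2/Real.sqrt 3 + 6/(9*Real.sqrt 3))*x^2 + (-(6/(9*Real.sqrt 3)))*x
          + 2/(9*Real.sqrt 3)) := by
    apply intervalIntegral.integral_congr
    intro x hx
    rw [uIcc_of_le (by norm_num : (0:ℝ) ≤ 1/2)] at hx
    simp only [hexH]; rw [abs_of_nonneg hx.1, hcube]
    field_simp
    try ring
    try (rw [sqrt3_sq]; ring)
    try (ring_nf; norm_num [sqrt3_sq])
    try ring
    try linarith [sqrt3_sq]
  rw [e1, e2, integral_cubic, integral_cubic]
  field_simp
  nlinarith [h3, hp]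


noncomputable def hexF : EuclideanSpace ℝ (Fin 2) ≃ᵐ ℝ × ℝ :=
  (MeasurableEquiv.toLp 2 (Fin 2 → ℝ)).symm.trans MeasurableEquiv.finTwoArrow

lemma hexF_apply (x : EuclideanSpace ℝ (Fin 2)) : hexF x = (x 0, x 1) := rfl

lemma hexF_mp : MeasurePreserving hexF volume volume :=
  (volume_preserving_finTwoArrow ℝ).comp (EuclideanSpace.volume_preserving_symm_measurableEquiv_toLp (Fin 2))

def hexT : Set (ℝ × ℝ) := {p | p.1 ∈ Icc (-(1/2) : ℝ) (1/2) ∧ p.2 ∈ Icc (-hexH p.1) (hexH p.1)}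

lemma hexH_cont : Continuous hexH := by unfold hexH; fun_prop

lemma hexT_meas : MeasurableSet hexT := by
  have : hexT = {p : ℝ × ℝ | -(1/2) ≤ p.1} ∩ {p | p.1 ≤ 1/2} ∩
      {p | -hexH p.1 ≤ p.2} ∩ {p | p.2 ≤ hexH p.1} := by
    ext p; simp [hexT, mem_Icc]; tauto
  rw [this]
  exact (((measurableSet_le measurable_const measurable_fst).inter
    (measurableSet_le measurable_fst measurable_const)).inter
    (measurableSet_le (hexH_cont.measurable.comp measurable_fst).neg measurable_snd)).inter
    (measurableSet_le measurable_snd (hexH_cont.measurable.comp measurable_fst))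

lemma hexT_sub : hexT ⊆ Icc (-(1/2):ℝ) (1/2) ×ˢ Icc (-1:ℝ) 1 := by
  rintro ⟨a, b⟩ ⟨h1, h2⟩
  have h3 : (1:ℝ) ≤ Real.sqrt 3 := by
    rw [show (1:ℝ) = Real.sqrt 1 by simp]; exact Real.sqrt_le_sqrt (by norm_num)
  have habs : |a| ≤ 1/2 := abs_le.2 ⟨h1.1, h1.2⟩
  have hH : hexH a ≤ 1 := by
    rw [hexH, div_le_one (by linarith)]
    have := abs_nonneg a; linarith
  exact ⟨h1, mem_Icc.2 ⟨le_trans (by linarith) h2.1, le_trans h2.2 hH⟩⟩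

lemma hex_integrable (f : ℝ × ℝ → ℝ) (hf : Continuous f) : Integrable (hexT.indicator f) := by
  rw [integrable_indicator_iff hexT_meas]
  exact (hf.continuousOn.integrableOn_compact (isCompact_Icc.prod isCompact_Icc)).mono_set hexT_sub

lemma hex_fubini (f : ℝ × ℝ → ℝ) (hf : Continuous f) :
    ∫ p in hexT, f p
      = ∫ x in Icc (-(1/2):ℝ) (1/2), ∫ y in Icc (-hexH x) (hexH x), f (x, y) := by
  have hInt := hex_integrable f hf
  rw [← MeasureTheory.integral_indicator hexT_meas]
  rw [show (volume : Measure (ℝ × ℝ)) = (volume : Measure ℝ).prod volume from MeasureTheory.Measure.volume_eq_prod ℝ ℝ]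
    at hInt ⊢
  rw [MeasureTheory.integral_prod _ hInt]
  rw [← MeasureTheory.integral_indicator (measurableSet_Icc : MeasurableSet (Icc (-(1/2):ℝ) (1/2)))]
  congr 1
  funext x
  by_cases hx : x ∈ Icc (-(1/2):ℝ) (1/2)
  · have he : (fun y => hexT.indicator f (x, y))
        = (Icc (-hexH x) (hexH x)).indicator (fun y => f (x, y)) := by
      funext y
      by_cases hy : y ∈ Icc (-hexH x) (hexH x)
      · rw [Set.indicator_of_mem hy, Set.indicator_of_mem (show (x,y) ∈ hexT from ⟨hx, hy⟩)]
      · rw [Set.indicator_of_notMem hy,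
          Set.indicator_of_notMem (fun h => hy h.2)]
    rw [he, MeasureTheory.integral_indicator measurableSet_Icc, Set.indicator_of_mem hx]
  · have he : ∀ y, hexT.indicator f (x, y) = 0 :=
      fun y => Set.indicator_of_notMem (fun h => hx h.1) f
    rw [Set.indicator_of_notMem hx]
    simp [he]

lemma hexT_mem_iff (a y : ℝ) :
    (a, y) ∈ hexT ↔ |a| ≤ 1/2 ∧ |a / 2 + y * (Real.sqrt 3 / 2)| ≤ 1/2 ∧
      |a / 2 - y * (Real.sqrt 3 / 2)| ≤ 1/2 := by
  have hp := sqrt3_pos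
  have h3 := sqrt3_sq
  constructor
  · rintro ⟨h1, h2⟩
    rw [mem_Icc] at h1 h2
    have h1' : -(1/2) ≤ a ∧ a ≤ 1/2 := h1
    have h2u : y ≤ (1 - |a|) / Real.sqrt 3 := h2.2
    have h2l : -((1 - |a|) / Real.sqrt 3) ≤ y := h2.1
    have habs : |a| ≤ 1/2 := abs_le.2 h1'
    have hy1 : y * Real.sqrt 3 ≤ 1 - |a| := (le_div_iff₀ hp).1 h2u
    have hy2 : -y * Real.sqrt 3 ≤ 1 - |a| := (le_div_iff₀ hp).1 (neg_le.mp h2l)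
    have ha1 := neg_abs_le a
    have ha2 := le_abs_self a
    exact ⟨habs, abs_le.2 ⟨by linarith, by linarith⟩, abs_le.2 ⟨by linarith, by linarith⟩⟩
  · rintro ⟨h1, h2, h3'⟩
    rw [abs_le] at h1 h2 h3'
    refine ⟨mem_Icc.2 h1, mem_Icc.2 ⟨?_, ?_⟩⟩
    · show -((1 - |a|) / Real.sqrt 3) ≤ y
      rw [neg_le, le_div_iff₀ hp]
      rcases le_total 0 a with ha | ha
      · rw [abs_of_nonneg ha]; nlinarith [h2.1, h3'.2]
      · rw [abs_of_nonpos ha]; nlinarith [h2.1, h3'.2]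
    · show y ≤ (1 - |a|) / Real.sqrt 3
      rw [le_div_iff₀ hp]
      rcases le_total 0 a with ha | ha
      · rw [abs_of_nonneg ha]; nlinarith [h2.2, h3'.1]
      · rw [abs_of_nonpos ha]; nlinarith [h2.2, h3'.1]

lemma voronoi_eq_preimage : voronoiCell hexLattice = hexF ⁻¹' hexT := by
  ext x
  rw [mem_preimage, hexF_apply, voronoi_mem, hexT_mem_iff]

lemma hex_vol : (volume (voronoiCell hexLattice)).toReal = Real.sqrt 3 / 2 := by
  rw [voronoi_eq_preimage, hexF_mp.measure_preimage hexT_meas.nullMeasurableSet]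
  have h1 : ∫ p in hexT, (1:ℝ) = (volume hexT).toReal := by
    rw [setIntegral_const, smul_eq_mul, mul_one, measureReal_def]
  rw [← h1, hex_fubini _ continuous_const,
    setIntegral_congr_fun measurableSet_Icc (fun x hx => inner_const x hx), outer_area]

lemma hex_moment : ∫ r in voronoiCell hexLattice, ‖r‖ ^ 2 = 5 / (24 * Real.sqrt 3) := by
  rw [voronoi_eq_preimage]
  calc ∫ r in ⇑hexF ⁻¹' hexT, ‖r‖ ^ 2
      = ∫ r in ⇑hexF ⁻¹' hexT, (fun p : ℝ × ℝ => p.1 ^ 2 + p.2 ^ 2) (hexF r) :=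
        integral_congr_ae (Filter.Eventually.of_forall fun r => by
          show ‖r‖ ^ 2 = (hexF r).1 ^ 2 + (hexF r).2 ^ 2
          rw [hex_norm_sq, hexF_apply])
    _ = ∫ p in hexT, (p.1 ^ 2 + p.2 ^ 2) :=
        hexF_mp.setIntegral_preimage_emb hexF.measurableEmbedding (fun p : ℝ × ℝ => p.1 ^ 2 + p.2 ^ 2) hexT
    _ = 5 / (24 * Real.sqrt 3) := by
        rw [hex_fubini _ (by fun_prop),
          setIntegral_congr_fun measurableSet_Icc (fun x hx => inner_moment x hx), outer_moment]

/-- The normalized second moment of the hexagonal lattice `A₂` equals `5/(36√3)`. -/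
theorem normalized_second_moment_hexagonal :
    (1 / (2 * (volume (voronoiCell hexLattice)).toReal ^ 2)) *
      (∫ r in voronoiCell hexLattice, ‖r‖ ^ 2) = 5 / (36 * Real.sqrt 3) := by
  rw [hex_vol, hex_moment]
  have h3 := sqrt3_sq
  have hp := sqrt3_pos
  rw [div_pow, sqrt3_sq]
  have hne : Real.sqrt 3 ≠ 0 := ne_of_gt hp
  field_simp
  ring
end

section
/- Correctness of the D_n nearest-point rule for generic points: let x ∈ ℝⁿ have no coordinate at half-integer ties. Then the nearest point of D_n to x (in Euclidean distance) is whichever of f(x) and g(x) has even coordinate sum, where f(x) is componentwise nearest-integer rounding and g(x) flips the rounding of the coordinate furthest from an integer. -/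
private lemma sq_round_le (y : ℝ) (z : ℤ) :
    (y - (round y : ℝ)) ^ 2 ≤ (y - (z : ℝ)) ^ 2 := by
  rw [← sq_abs (y - (round y : ℝ)), ← sq_abs (y - (z : ℝ))]
  exact pow_le_pow_left₀ (abs_nonneg _) (round_le y z) 2

private lemma sq_flip_ge (y : ℝ) (z : ℤ) (hz : z ≠ round y) :
    (y - (z : ℝ)) ^ 2 - (y - (round y : ℝ)) ^ 2 ≥ 1 - 2 * |y - round y| := by
  have h1 : (1 : ℝ) ≤ |(z : ℝ) - (round y : ℝ)| := by
    rw [← Int.cast_sub, ← Int.cast_abs]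
    exact_mod_cast Int.one_le_abs (sub_ne_zero.mpr hz)
  have h2 : |(z : ℝ) - round y| ≤ |y - z| + |y - round y| := by
    calc |(z : ℝ) - round y| = |(y - (round y : ℝ)) - (y - z)| := by ring_nf
    _ ≤ |y - (round y : ℝ)| + |y - z| := abs_sub _ _
    _ = |y - z| + |y - round y| := by ring
  have h3 : 1 - |y - round y| ≤ |y - (z : ℝ)| := by linarith
  have h4 : (1 - |y - round y|) ^ 2 ≤ |y - (z : ℝ)| ^ 2 := by
    apply pow_le_pow_left₀ _ h3
    have := abs_sub_round y; linarith
  rw [sq_abs] at h4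
  have h5 : (1 - |y - round y|) ^ 2 = 1 - 2 * |y - round y| + (y - round y)^2 := by
    rw [← sq_abs (y - (round y : ℝ))]; ring
  linarith

/-- Correctness of the `D_n` nearest-point rule for generic points: if no coordinate of `x`
is at a half-integer tie and the coordinate furthest from an integer is unique, then the
nearest point of `D_n = {z ∈ ℤⁿ : Σ zᵢ even}` to `x` is whichever of `f x` (componentwise
rounding) and `g` (flip the rounding of the furthest coordinate) has even coordinate sum. -/
theorem dn_nearest_point_rule {n : ℕ} (x : Fin n → ℝ) (istar : Fin n)
    (hties : ∀ i, |x i - round (x i)| < 1 / 2)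
    (hmax : ∀ i, i ≠ istar → |x i - round (x i)| < |x istar - round (x istar)|)
    (g : Fin n → ℤ)
    (hg : ∀ i, i ≠ istar → g i = round (x i))
    (hgstar : g istar =
      if (round (x istar) : ℝ) ≤ x istar then round (x istar) + 1 else round (x istar) - 1)
    (w : Fin n → ℤ)
    (hw : w = if Even (∑ i, round (x i)) then fun i => round (x i) else g) :
    Even (∑ i, w i) ∧
      ∀ z : Fin n → ℤ, Even (∑ i, z i) →
        ∑ i, (x i - (w i : ℝ)) ^ 2 ≤ ∑ i, (x i - (z i : ℝ)) ^ 2 := by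
  by_cases hE : Even (∑ i, round (x i))
  · rw [hw, if_pos hE]
    exact ⟨hE, fun z _ => Finset.sum_le_sum fun i _ => sq_round_le (x i) (z i)⟩
  · rw [hw, if_neg hE]
    set b := |x istar - round (x istar)| with hb
    -- g istar ≠ round, and sum of g is even
    have hgdiff : g istar - round (x istar) = 1 ∨ g istar - round (x istar) = -1 := by
      rw [hgstar]; split <;> simp
    have hgne : g istar ≠ round (x istar) := by
      rcases hgdiff with h | h <;> omega
    have hsum : ∑ i, g i = ∑ i, round (x i) + (g istar - round (x istar)) := by
      have : ∑ i, g i - ∑ i, round (x i) = ∑ i, (g i - round (x i)) := by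
        rw [Finset.sum_sub_distrib]
      have h2 : ∑ i, (g i - round (x i)) = g istar - round (x istar) := by
        apply Finset.sum_eq_single
        · intro i _ hi; rw [hg i hi]; ring
        · intro h; exact absurd (Finset.mem_univ istar) h
      omega
    have hEg : Even (∑ i, g i) := by
      rcases hgdiff with h | h <;> rw [hsum, h] <;> simpa [Int.even_add, Int.even_sub] using hE
    refine ⟨hEg, fun z hz => ?_⟩
    -- cost(g) = cost(r) + 1 - 2b
    have hgstarval : (x istar - (g istar : ℝ)) ^ 2 =
        (x istar - (round (x istar) : ℝ)) ^ 2 + (1 - 2 * b) := by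
      rw [hgstar]
      split
      · next h =>
        rw [hb, abs_of_nonneg (by linarith)]
        push_cast; ring
      · next h =>
        push_neg at h
        rw [hb, abs_of_nonpos (by push_cast; linarith)]
        push_cast; ring
    have hcostg : ∑ i, (x i - (g i : ℝ)) ^ 2 =
        ∑ i, (x i - (round (x i) : ℝ)) ^ 2 + (1 - 2 * b) := by
      have : ∑ i, ((x i - (g i : ℝ)) ^ 2 - (x i - (round (x i) : ℝ)) ^ 2) = 1 - 2 * b := by
        rw [Finset.sum_eq_single istar]
        · rw [hgstarval]; ring
        · intro i _ hi; rw [hg i hi]; ring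
        · intro h; exact absurd (Finset.mem_univ istar) h
      rw [Finset.sum_sub_distrib] at this; linarith
    -- z ≠ r
    have hzne : z ≠ fun i => round (x i) := by
      intro h; rw [h] at hz; exact hE hz
    obtain ⟨j, hj⟩ : ∃ j, z j ≠ round (x j) := by
      by_contra h; push_neg at h; exact hzne (funext h)
    -- cost(z) ≥ cost(r) + 1 - 2b
    have hkey : ∑ i, ((x i - (z i : ℝ)) ^ 2 - (x i - (round (x i) : ℝ)) ^ 2) ≥ 1 - 2 * b := by
      have hle : |x j - round (x j)| ≤ b := by
        by_cases hji : j = istar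
        · subst hji; exact le_refl _
        · exact (hmax j hji).le
      calc ∑ i, ((x i - (z i : ℝ)) ^ 2 - (x i - (round (x i) : ℝ)) ^ 2)
          ≥ (x j - (z j : ℝ)) ^ 2 - (x j - (round (x j) : ℝ)) ^ 2 := by
            refine Finset.single_le_sum (f := fun i => (x i - (z i : ℝ)) ^ 2 - (x i - (round (x i) : ℝ)) ^ 2)
              ?_ (Finset.mem_univ j)
            intro i _
            have := sq_round_le (x i) (z i)
            linarith
        _ ≥ 1 - 2 * |x j - round (x j)| := sq_flip_ge (x j) (z j) hj
        _ ≥ 1 - 2 * b := by linarith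
    rw [Finset.sum_sub_distrib] at hkey
    linarith [hcostg]
end
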